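/- Let H be a real Hilbert space and let S, T be bounded invertible self-adjoint operators on H such that S − T is compact. Then the intersections E₋(S) ∩ E₊(T) and E₊(S) ∩ E₋(T) of the negative spectral subspace of one operator with the positive spectral subspace of the other are both finite dimensional. -/

import Mathlib

open scoped InnerProductSpace

section Aux

variable {H : Type*} [NormedAddCommGroup H] [InnerProductSpace ℝ H] [CompleteSpace H]

/-- An invertible operator is bounded below. -/
lemma aux_bounded_below (S : H →L[ℝ] H) (hSinv : IsUnit S) :
    ∃ m : ℝ, 0 ≤ m ∧ ∀ u : H, ‖u‖ ≤ m * ‖S u‖ := by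
  obtain ⟨U, hU⟩ := hSinv
  refine ⟨‖(↑U⁻¹ : H →L[ℝ] H)‖, norm_nonneg _, fun u => ?_⟩
  have h1 : (↑U⁻¹ : H →L[ℝ] H) (S u) = u := by
    have := U.inv_mul
    calc (↑U⁻¹ : H →L[ℝ] H) (S u) = ((↑U⁻¹ * ↑U : H →L[ℝ] H)) u := by rw [hU]; rfl
    _ = u := by rw [U.inv_mul]; rfl
  calc ‖u‖ = ‖(↑U⁻¹ : H →L[ℝ] H) (S u)‖ := by rw [h1]
  _ ≤ ‖(↑U⁻¹ : H →L[ℝ] H)‖ * ‖S u‖ := ContinuousLinearMap.le_opNorm _ _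

/-- Spectral gap: an invertible self-adjoint operator which is negative definite on an
invariant subspace is uniformly negative there. -/
lemma aux_gap [Nontrivial H] (S : H →L[ℝ] H) (hS : IsSelfAdjoint S) (hSinv : IsUnit S)
    (W : Submodule ℝ H) (hWinv : ∀ u ∈ W, S u ∈ W)
    (hneg : ∀ u ∈ W, u ≠ 0 → ⟪S u, u⟫_ℝ < 0) :
    ∃ c : ℝ, 0 < c ∧ ∀ u ∈ W, c * ‖u‖ ^ 2 ≤ -⟪S u, u⟫_ℝ := by
  obtain ⟨m, hm0, hm⟩ := aux_bounded_below S hSinv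
  have hsymm := hS.isSymmetric
  -- S ≠ 0 since H nontrivial and S invertible
  have hMpos : 0 < ‖S‖ := by
    rcases exists_ne (0 : H) with ⟨x, hx⟩
    have : S x ≠ 0 := by
      intro h
      have := hm x
      rw [h, norm_zero, mul_zero] at this
      exact hx (norm_le_zero_iff.mp this)
    have := norm_pos_iff.mpr this
    calc (0:ℝ) < ‖S x‖ / ‖x‖ := div_pos this (norm_pos_iff.mpr hx)
    _ ≤ ‖S‖ := ContinuousLinearMap.ratio_le_opNorm S x
  have hmpos : 0 < m := by
    rcases exists_ne (0 : H) with ⟨x, hx⟩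
    by_contra h
    push_neg at h
    have hm0' : m = 0 := le_antisymm h hm0
    have := hm x
    rw [hm0', zero_mul] at this
    exact hx (norm_le_zero_iff.mp this)
  refine ⟨1 / (m ^ 2 * ‖S‖), by positivity, fun u hu => ?_⟩
  by_cases hu0 : u = 0
  · simp [hu0]
  -- nonnegativity of the form ⟪-S v, v⟫ on W
  have hnn : ∀ v ∈ W, 0 ≤ -⟪S v, v⟫_ℝ := by
    intro v hv
    by_cases hv0 : v = 0
    · simp [hv0]
    · linarith [hneg v hv hv0]
  set v := S u with hvdef
  have hvW : v ∈ W := hWinv u hu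
  have hv0 : v ≠ 0 := by
    intro h
    have := hm u
    rw [← hvdef, h, norm_zero, mul_zero] at this
    exact hu0 (norm_le_zero_iff.mp this)
  -- Cauchy-Schwarz via the quadratic in t
  have key : ∀ t : ℝ, 0 ≤ (-⟪S v, v⟫_ℝ) * (t * t) + (-2 * ‖v‖ ^ 2) * t + (-⟪S u, u⟫_ℝ) := by
    intro t
    have hmem : u + t • v ∈ W := W.add_mem hu (W.smul_mem t hvW)
    have h0 := hnn _ hmem
    have hexp : ⟪S (u + t • v), u + t • v⟫_ℝ
        = ⟪S v, v⟫_ℝ * (t * t) + (2 * ‖v‖ ^ 2) * t + ⟪S u, u⟫_ℝ := by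
      have hsv : ⟪S v, u⟫_ℝ = ⟪S u, v⟫_ℝ :=
        (hsymm v u).trans (real_inner_comm v (S u))
      have huv : ⟪S u, v⟫_ℝ = ‖v‖ ^ 2 := by
        rw [← hvdef, real_inner_self_eq_norm_sq]
      rw [map_add, map_smul, inner_add_left, inner_add_right, inner_add_right,
        real_inner_smul_left, real_inner_smul_left, real_inner_smul_right,
        real_inner_smul_right, hsv, huv]
      ring
    rw [hexp] at h0
    linarith
  have hdisc := discrim_le_zero key
  rw [discrim] at hdisc
  -- hdisc : (-2‖v‖²)² - 4 * (-⟪Sv,v⟫) * (-⟪Su,u⟫) ≤ 0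
  have ha : -⟪S v, v⟫_ℝ ≤ ‖S‖ * ‖v‖ ^ 2 := by
    have := abs_real_inner_le_norm (S v) v
    have h2 : ‖S v‖ * ‖v‖ ≤ (‖S‖ * ‖v‖) * ‖v‖ :=
      mul_le_mul_of_nonneg_right (S.le_opNorm v) (norm_nonneg v)
    nlinarith [abs_nonneg ⟪S v, v⟫_ℝ, neg_abs_le ⟪S v, v⟫_ℝ]
  have hc0 : 0 ≤ -⟪S u, u⟫_ℝ := hnn u hu
  have hvnorm : 0 < ‖v‖ := norm_pos_iff.mpr hv0
  -- from hdisc : 4‖v‖⁴ ≤ 4⟪-Sv,v⟫⟪-Su,u⟫ ≤ 4 M ‖v‖² ⟪-Su,u⟫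
  have h3 : ‖v‖ ^ 2 ≤ ‖S‖ * (-⟪S u, u⟫_ℝ) := by
    have hs : (0:ℝ) < ‖v‖ ^ 2 := by positivity
    rw [← mul_le_mul_iff_of_pos_right hs]
    nlinarith [mul_le_mul_of_nonneg_right ha hc0]
  -- and ‖u‖ ≤ m ‖v‖
  have h4 : ‖u‖ ^ 2 ≤ m ^ 2 * ‖v‖ ^ 2 := by
    have := hm u
    nlinarith [norm_nonneg u, norm_nonneg v]
  rw [div_mul_eq_mul_div, one_mul, div_le_iff₀ (by positivity)]
  calc ‖u‖ ^ 2 ≤ m ^ 2 * ‖v‖ ^ 2 := h4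
  _ ≤ m ^ 2 * (‖S‖ * (-⟪S u, u⟫_ℝ)) := by nlinarith
  _ = -⟪S u, u⟫_ℝ * (m ^ 2 * ‖S‖) := by ring

/-- Riesz: a closed subspace on which a compact operator is bounded below is
finite dimensional. -/
lemma aux_riesz (K : H →L[ℝ] H) (hK : IsCompactOperator ⇑K)
    (V : Submodule ℝ H) (hVclosed : IsClosed (V : Set H))
    (c : ℝ) (hc : 0 < c) (hb : ∀ u ∈ V, c * ‖u‖ ≤ ‖K u‖) :
    FiniteDimensional ℝ V := by
  apply FiniteDimensional.of_isCompact_closedBall₀ ℝ (zero_lt_one (α := ℝ))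
  rw [Subtype.isCompact_iff]
  have himg : (Subtype.val '' Metric.closedBall (0 : V) 1)
      = (V : Set H) ∩ Metric.closedBall (0 : H) 1 := by
    ext x
    simp only [Set.mem_image, Metric.mem_closedBall, Set.mem_inter_iff, SetLike.mem_coe]
    constructor
    · rintro ⟨y, hy, rfl⟩
      exact ⟨y.2, by simpa [dist_eq_norm] using hy⟩
    · rintro ⟨hxV, hx1⟩
      exact ⟨⟨x, hxV⟩, by simpa [dist_eq_norm, Subtype.dist_eq] using hx1, rfl⟩
  rw [himg]
  have hAclosed : IsClosed ((V : Set H) ∩ Metric.closedBall (0 : H) 1) :=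
    hVclosed.inter Metric.isClosed_closedBall
  -- sequential compactness
  apply IsSeqCompact.isCompact
  intro x hx
  have hKb : IsCompact (closure (⇑K '' Metric.closedBall (0 : H) 1)) := by
    have : IsCompactOperator ⇑(K : H →ₗ[ℝ] H) := hK
    exact this.isCompact_closure_image_of_bounded (Metric.isBounded_closedBall)
  have hxK : ∀ n, K (x n) ∈ closure (⇑K '' Metric.closedBall (0 : H) 1) := fun n =>
    subset_closure ⟨x n, (hx n).2, rfl⟩
  obtain ⟨a, _, φ, hφ, hconv⟩ := hKb.tendsto_subseq hxK
  have hcauchyK : CauchySeq (fun n => K (x (φ n))) := hconv.cauchySeq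
  have hcauchy : CauchySeq (fun n => x (φ n)) := by
    rw [Metric.cauchySeq_iff]
    intro ε hε
    rw [Metric.cauchySeq_iff] at hcauchyK
    obtain ⟨N, hN⟩ := hcauchyK (c * ε) (by positivity)
    refine ⟨N, fun p hp q hq => ?_⟩
    have hd := hN p hp q hq
    have hmem : x (φ p) - x (φ q) ∈ V := V.sub_mem (hx (φ p)).1 (hx (φ q)).1
    have := hb _ hmem
    rw [map_sub] at this
    rw [dist_eq_norm] at hd ⊢
    have : c * ‖x (φ p) - x (φ q)‖ < c * ε := lt_of_le_of_lt this hd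
    exact lt_of_mul_lt_mul_left this hc.le
  obtain ⟨b, hbconv⟩ := cauchySeq_tendsto_of_complete hcauchy
  refine ⟨b, ?_, φ, hφ, hbconv⟩
  exact hAclosed.mem_of_tendsto hbconv (Filter.Eventually.of_forall fun n => hx (φ n))

/-- Range of an idempotent continuous linear map is closed. -/
lemma aux_range_closed (P : H →L[ℝ] H) (hP : IsIdempotentElem P) :
    IsClosed ((LinearMap.range (P : H →ₗ[ℝ] H) : Submodule ℝ H) : Set H) := by
  have : (LinearMap.range (P : H →ₗ[ℝ] H) : Submodule ℝ H)
      = LinearMap.ker ((ContinuousLinearMap.id ℝ H - P : H →L[ℝ] H) : H →ₗ[ℝ] H) := by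
    ext x
    simp only [LinearMap.mem_range, LinearMap.mem_ker, ContinuousLinearMap.coe_coe, ContinuousLinearMap.coe_sub',
      Pi.sub_apply, ContinuousLinearMap.coe_id', id_eq, sub_eq_zero]
    constructor
    · rintro ⟨y, rfl⟩
      exact (congrFun (congrArg DFunLike.coe hP) y).symm
    · intro h
      exact ⟨x, h.symm⟩
  rw [this]
  exact ContinuousLinearMap.isClosed_ker _

/-- One half of the main statement. -/
lemma aux_half (S T PS PT : H →L[ℝ] H)
    (hS : IsSelfAdjoint S)
    (hSinv : IsUnit S)
    (hcpt : IsCompactOperator (⇑(S - T)))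
    (hPSproj : IsIdempotentElem PS)
    (hPScomm : S.comp PS = PS.comp S)
    (hPSneg : ∀ u ∈ LinearMap.range (PS : H →ₗ[ℝ] H), u ≠ 0 → ⟪S u, u⟫_ℝ < 0)
    (hPTpos : ∀ u ∈ LinearMap.ker (PT : H →ₗ[ℝ] H), u ≠ 0 → 0 < ⟪T u, u⟫_ℝ) :
    FiniteDimensional ℝ ↥(LinearMap.range (PS : H →ₗ[ℝ] H) ⊓ LinearMap.ker (PT : H →ₗ[ℝ] H)) := by
  cases subsingleton_or_nontrivial H
  · infer_instance
  -- invariance of range PS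
  have hWinv : ∀ u ∈ LinearMap.range (PS : H →ₗ[ℝ] H), S u ∈ LinearMap.range (PS : H →ₗ[ℝ] H) := by
    rintro u ⟨y, rfl⟩
    refine ⟨S y, ?_⟩
    exact (congrFun (congrArg DFunLike.coe hPScomm) y).symm
  obtain ⟨c, hc, hgap⟩ := aux_gap S hS hSinv _ hWinv hPSneg
  apply aux_riesz (S - T) hcpt _ ?_ c hc
  · intro u hu
    obtain ⟨huS, huT⟩ := hu
    by_cases hu0 : u = 0
    · simp [hu0]
    have h1 : c * ‖u‖ ^ 2 ≤ -⟪S u, u⟫_ℝ := hgap u huS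
    have h2 : 0 < ⟪T u, u⟫_ℝ := hPTpos u huT hu0
    have h3 : c * ‖u‖ ^ 2 ≤ ⟪(T - S) u, u⟫_ℝ := by
      simp only [ContinuousLinearMap.coe_sub', Pi.sub_apply, inner_sub_left]
      linarith
    have h4 : ⟪(T - S) u, u⟫_ℝ ≤ ‖(T - S) u‖ * ‖u‖ :=
      real_inner_le_norm _ _
    have h5 : ‖(T - S) u‖ = ‖(S - T) u‖ := by
      have : (T - S) u = -((S - T) u) := by
        simp only [ContinuousLinearMap.sub_apply, neg_sub]
      rw [this, norm_neg]
    have hun : 0 < ‖u‖ := norm_pos_iff.mpr hu0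
    have h6 : c * ‖u‖ * ‖u‖ ≤ ‖(S - T) u‖ * ‖u‖ := by
      rw [← h5]
      nlinarith
    exact le_of_mul_le_mul_right h6 hun
  · have h1 := aux_range_closed PS hPSproj
    have h2 : IsClosed ((LinearMap.ker (PT : H →ₗ[ℝ] H) : Submodule ℝ H) : Set H) :=
      ContinuousLinearMap.isClosed_ker PT
    rw [Submodule.coe_inf]
    exact h1.inter h2

end Aux

theorem stmt_0
    {H : Type*} [NormedAddCommGroup H] [InnerProductSpace ℝ H] [CompleteSpace H]
    (S T PS PT : H →L[ℝ] H)
    (hS : IsSelfAdjoint S) (hT : IsSelfAdjoint T)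
    (hSinv : IsUnit S) (hTinv : IsUnit T)
    (hcpt : IsCompactOperator (⇑(S - T)))
    (hPSproj : IsIdempotentElem PS) (hPSsa : IsSelfAdjoint PS)
    (hPScomm : S.comp PS = PS.comp S)
    (hPSneg : ∀ u ∈ LinearMap.range (PS : H →ₗ[ℝ] H), u ≠ 0 → ⟪S u, u⟫_ℝ < 0)
    (hPSpos : ∀ u ∈ LinearMap.ker (PS : H →ₗ[ℝ] H), u ≠ 0 → 0 < ⟪S u, u⟫_ℝ)
    (hPTproj : IsIdempotentElem PT) (hPTsa : IsSelfAdjoint PT)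
    (hPTcomm : T.comp PT = PT.comp T)
    (hPTneg : ∀ u ∈ LinearMap.range (PT : H →ₗ[ℝ] H), u ≠ 0 → ⟪T u, u⟫_ℝ < 0)
    (hPTpos : ∀ u ∈ LinearMap.ker (PT : H →ₗ[ℝ] H), u ≠ 0 → 0 < ⟪T u, u⟫_ℝ) :
    FiniteDimensional ℝ ↥(LinearMap.range (PS : H →ₗ[ℝ] H) ⊓ LinearMap.ker (PT : H →ₗ[ℝ] H)) ∧
    FiniteDimensional ℝ ↥(LinearMap.ker (PS : H →ₗ[ℝ] H) ⊓ LinearMap.range (PT : H →ₗ[ℝ] H)) := by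
  have hcpt' : IsCompactOperator (⇑(T - S)) := by
    have : ⇑(T - S) = -⇑(S - T) := by
      ext x; simp
    rw [this]
    exact hcpt.neg
  constructor
  · exact aux_half S T PS PT hS hSinv hcpt hPSproj hPScomm hPSneg hPTpos
  · rw [inf_comm]
    exact aux_half T S PT PS hT hTinv hcpt' hPTproj hPTcomm hPTneg hPSpos
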